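/- arXiv:2411.11129 — 2 statements merged into one kernel-verified Lean document; each statement's English description precedes it below -/
import Mathlib

section
/- The explicit finite-difference scheme θ_j^{k+1} = θ_j^k + (Δt/Δz^2)(B(θ_{j+1}^k/n_0) - 2B(θ_j^k/n_0) + B(θ_{j-1}^k/n_0)) preserves nonnegativity and the upper bound n_0: if 0 ≤ θ_j^k ≤ n_0 for all j and Δt/Δz^2 ≤ n_0/(2L) where L = sup|B'|, then 0 ≤ θ_j^{k+1} ≤ n_0 for all interior j. -/
theorem stmt_13 (n0 Δt Δz L : ℝ) (hn0 : 0 < n0) (hΔt : 0 < Δt) (hΔz : 0 < Δz) (hL : 0 < L)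
    (B : ℝ → ℝ) (hmono : Monotone B)
    (hLip : ∀ x y : ℝ, |B x - B y| ≤ L * |x - y|)
    (hCFL : Δt / Δz ^ 2 ≤ n0 / (2 * L))
    (θ : ℤ → ℝ) (hθ : ∀ j, θ j ∈ Set.Icc 0 n0) (j : ℤ) :
    θ j + Δt / Δz ^ 2 * (B (θ (j + 1) / n0) - 2 * B (θ j / n0) + B (θ (j - 1) / n0))
      ∈ Set.Icc 0 n0 := by
  set μ := Δt / Δz ^ 2 with hμ
  have hμpos : 0 < μ := div_pos hΔt (by positivity)
  obtain ⟨hb0, hbn⟩ := hθ j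
  obtain ⟨ha0, han⟩ := hθ (j + 1)
  obtain ⟨hc0, hcn⟩ := hθ (j - 1)
  have hμL : 2 * L * μ ≤ n0 := by
    have h := mul_le_mul_of_nonneg_left hCFL (by positivity : (0:ℝ) ≤ 2 * L)
    have h2 : 2 * L * (n0 / (2 * L)) = n0 := by field_simp
    linarith
  have key1 : ∀ x y : ℝ, 0 ≤ x → 0 ≤ y → B (y / n0) - B (x / n0) ≤ L * y / n0 := by
    intro x y hx hy
    rcases le_or_gt y x with h | h
    · have h1 : y / n0 ≤ x / n0 := by gcongr
      have h2 := hmono h1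
      have h3 : 0 ≤ L * y / n0 := by positivity
      linarith
    · have h1 := hLip (y / n0) (x / n0)
      have heq : |y / n0 - x / n0| = (y - x) / n0 := by
        rw [div_sub_div_same, abs_of_nonneg (div_nonneg (by linarith) hn0.le)]
      rw [heq] at h1
      have h3 := le_abs_self (B (y / n0) - B (x / n0))
      have h4 : L * ((y - x) / n0) ≤ L * (y / n0) := by
        gcongr
        linarith
      rw [mul_div_assoc]
      linarith
  have key2 : ∀ x y : ℝ, x ≤ n0 → y ≤ n0 → B (y / n0) - B (x / n0) ≤ L * (n0 - x) / n0 := by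
    intro x y hx hy
    rcases le_or_gt y x with h | h
    · have h1 : y / n0 ≤ x / n0 := by gcongr
      have h2 := hmono h1
      have h3 : 0 ≤ L * (n0 - x) / n0 := by
        apply div_nonneg _ hn0.le
        apply mul_nonneg hL.le
        linarith
      linarith
    · have h1 := hLip (y / n0) (x / n0)
      have heq : |y / n0 - x / n0| = (y - x) / n0 := by
        rw [div_sub_div_same, abs_of_nonneg (div_nonneg (by linarith) hn0.le)]
      rw [heq] at h1
      have h3 := le_abs_self (B (y / n0) - B (x / n0))
      have h4 : L * ((y - x) / n0) ≤ L * ((n0 - x) / n0) := by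
        have : y - x ≤ n0 - x := by linarith
        gcongr
      rw [mul_div_assoc]
      linarith
  have k1a := key1 (θ (j + 1)) (θ j) ha0 hb0
  have k1c := key1 (θ (j - 1)) (θ j) hc0 hb0
  have k2a := key2 (θ j) (θ (j + 1)) hbn han
  have k2c := key2 (θ j) (θ (j - 1)) hbn hcn
  have hbn0 : θ j / n0 ≤ 1 := by rw [div_le_one hn0]; exact hbn
  have hb00 : 0 ≤ θ j / n0 := by positivity
  have hμLn : 2 * L * μ / n0 ≤ 1 := by rw [div_le_one hn0]; exact hμL
  constructor
  · -- lower bound: expr ≥ θ j - μ * (2 L θj / n0) ≥ θ j (1 - 2Lμ/n0) ≥ 0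
    have hsum : -(2 * (L * θ j / n0)) ≤
        B (θ (j + 1) / n0) - 2 * B (θ j / n0) + B (θ (j - 1) / n0) := by linarith
    have h5 := mul_le_mul_of_nonneg_left hsum hμpos.le
    have h6 : μ * (2 * (L * θ j / n0)) ≤ θ j := by
      have e : μ * (2 * (L * θ j / n0)) = (2 * L * μ) * (θ j / n0) := by ring
      have h7 := mul_le_mul_of_nonneg_right hμL hb00
      have e2 : n0 * (θ j / n0) = θ j := by field_simp
      linarith
    linarith
  · have hsum : B (θ (j + 1) / n0) - 2 * B (θ j / n0) + B (θ (j - 1) / n0)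
        ≤ 2 * (L * (n0 - θ j) / n0) := by linarith
    have h5 := mul_le_mul_of_nonneg_left hsum hμpos.le
    have h6 : μ * (2 * (L * (n0 - θ j) / n0)) ≤ n0 - θ j := by
      have e : μ * (2 * (L * (n0 - θ j) / n0)) = (2 * L * μ) * ((n0 - θ j) / n0) := by ring
      have h7 := mul_le_mul_of_nonneg_right hμL (div_nonneg (by linarith : (0:ℝ) ≤ n0 - θ j) hn0.le)
      have e2 : n0 * ((n0 - θ j) / n0) = n0 - θ j := by field_simp
      linarith
    linarith
end

section
/- Under the CFL condition Δt/Δz^2 ≤ n_0/(2L) with L the Lipschitz constant of B, the finite-difference update operator is monotone: if θ_j ≤ η_j for all j (with θ, η ∈ [0, n_0]^ℤ), then the updated values satisfy θ_j' ≤ η_j' for all interior j. -/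
theorem stmt_14 (n0 Δt Δz L : ℝ) (hn0 : 0 < n0) (hΔt : 0 < Δt) (hΔz : 0 < Δz) (hL : 0 < L)
    (B : ℝ → ℝ) (hmono : Monotone B)
    (hLip : ∀ x y : ℝ, |B x - B y| ≤ L * |x - y|)
    (hCFL : Δt / Δz ^ 2 ≤ n0 / (2 * L))
    (θ η : ℤ → ℝ)
    (hθ : ∀ j, θ j ∈ Set.Icc 0 n0) (hη : ∀ j, η j ∈ Set.Icc 0 n0)
    (hle : ∀ j, θ j ≤ η j) (j : ℤ) :
    θ j + Δt / Δz ^ 2 * (B (θ (j + 1) / n0) - 2 * B (θ j / n0) + B (θ (j - 1) / n0))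
      ≤ η j + Δt / Δz ^ 2 * (B (η (j + 1) / n0) - 2 * B (η j / n0) + B (η (j - 1) / n0)) := by
  set μ := Δt / Δz ^ 2 with hμ
  have hμpos : 0 < μ := div_pos hΔt (by positivity)
  have hd : 0 ≤ η j - θ j := sub_nonneg.mpr (hle j)
  have h1 : B (θ (j + 1) / n0) ≤ B (η (j + 1) / n0) :=
    hmono (div_le_div_of_nonneg_right (hle (j + 1)) hn0.le)
  have h2 : B (θ (j - 1) / n0) ≤ B (η (j - 1) / n0) :=
    hmono (div_le_div_of_nonneg_right (hle (j - 1)) hn0.le)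
  have h3 : B (η j / n0) - B (θ j / n0) ≤ L * ((η j - θ j) / n0) := by
    have := hLip (η j / n0) (θ j / n0)
    have habs : |η j / n0 - θ j / n0| = (η j - θ j) / n0 := by
      have : η j / n0 - θ j / n0 = (η j - θ j) / n0 := by ring
      rw [this, abs_of_nonneg (div_nonneg hd hn0.le)]
    rw [habs] at this
    calc B (η j / n0) - B (θ j / n0) ≤ |B (η j / n0) - B (θ j / n0)| := le_abs_self _
      _ ≤ L * ((η j - θ j) / n0) := this
  have hcfl : 2 * L * μ ≤ n0 := by
    have := (le_div_iff₀ (by positivity : (0:ℝ) < 2 * L)).mp hCFL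
    linarith
  -- 2μ(B(η j/n0) - B(θ j/n0)) ≤ 2μ L (η j - θ j)/n0 ≤ η j - θ j
  have key : 2 * μ * (B (η j / n0) - B (θ j / n0)) ≤ η j - θ j := by
    have h4 : 2 * μ * (B (η j / n0) - B (θ j / n0)) ≤ 2 * μ * (L * ((η j - θ j) / n0)) :=
      mul_le_mul_of_nonneg_left h3 (by positivity)
    have h5 : 2 * μ * (L * ((η j - θ j) / n0)) ≤ η j - θ j := by
      have hq : 0 ≤ (η j - θ j) / n0 := div_nonneg hd hn0.le
      have hdn : (η j - θ j) / n0 * n0 = η j - θ j := div_mul_cancel₀ _ hn0.ne'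
      nlinarith [mul_le_mul_of_nonneg_right hcfl hq]
    linarith
  nlinarith [mul_le_mul_of_nonneg_left h1 hμpos.le, mul_le_mul_of_nonneg_left h2 hμpos.le]
end
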